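/- Let $\theta^\star \in \mathbb{R}^d$ with $\|\theta^\star\| \leq B$, let $h_1,\dots,h_n \in \mathbb{R}^d$, and let $\hat\theta = \Sigma^{-1} \sum_{j=1}^n h_j y_j$ be the ridge regression estimator with $\Sigma = \lambda I_d + \sum_{j=1}^n h_j h_j^\top$, where $y_j = \langle \theta^\star, h_j \rangle$ (noiseless targets). Then for any $h \in \mathbb{R}^d$, $|\langle \hat\theta - \theta^\star, h \rangle| \leq B\sqrt{\lambda}\,\sqrt{h^\top \Sigma^{-1} h}$. -/

import Mathlib

open Matrix Finset

lemma my_vecMulVec_mulVec {d : ℕ} (a b x : Fin d → ℝ) :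
    vecMulVec a b *ᵥ x = (b ⬝ᵥ x) • a := by
  ext i
  simp [mulVec, vecMulVec_apply, dotProduct, Finset.mul_sum, mul_comm, mul_left_comm]

lemma my_sum_mulVec {d n : ℕ} (A : Fin n → Matrix (Fin d) (Fin d) ℝ) (x : Fin d → ℝ) :
    (∑ j, A j) *ᵥ x = ∑ j, A j *ᵥ x := by
  ext i
  simp [mulVec, dotProduct, Matrix.sum_apply, Finset.sum_mul]
  rw [Finset.sum_comm]

lemma my_dotProduct_sum {d n : ℕ} (x : Fin d → ℝ) (f : Fin n → Fin d → ℝ) :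
    x ⬝ᵥ (∑ j, f j) = ∑ j, x ⬝ᵥ f j := by
  simp [dotProduct, Finset.mul_sum, Finset.sum_apply]
  rw [Finset.sum_comm]

lemma my_dot_self_nonneg {d : ℕ} (a : Fin d → ℝ) : 0 ≤ a ⬝ᵥ a :=
  Finset.sum_nonneg fun i _ => mul_self_nonneg _

-- Cauchy–Schwarz for the Euclidean dot product
lemma my_cs {d : ℕ} (a b : Fin d → ℝ) :
    |a ⬝ᵥ b| ≤ Real.sqrt (a ⬝ᵥ a) * Real.sqrt (b ⬝ᵥ b) := by
  have h1 : (a ⬝ᵥ b) ^ 2 ≤ (a ⬝ᵥ a) * (b ⬝ᵥ b) := by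
    have := sum_mul_sq_le_sq_mul_sq Finset.univ a b
    simpa [dotProduct, pow_two] using this
  calc |a ⬝ᵥ b| = Real.sqrt ((a ⬝ᵥ b) ^ 2) := (Real.sqrt_sq_eq_abs _).symm
    _ ≤ Real.sqrt ((a ⬝ᵥ a) * (b ⬝ᵥ b)) := Real.sqrt_le_sqrt h1
    _ = Real.sqrt (a ⬝ᵥ a) * Real.sqrt (b ⬝ᵥ b) := Real.sqrt_mul (my_dot_self_nonneg a) _

lemma my_transpose_eq {d : ℕ} {M : Matrix (Fin d) (Fin d) ℝ} (hM : M.IsHermitian) :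
    Mᵀ = M := by
  ext i j
  conv_rhs => rw [← hM]
  simp [conjTranspose_apply]

lemma my_herm_dot {d : ℕ} {M : Matrix (Fin d) (Fin d) ℝ} (hM : M.IsHermitian)
    (a b : Fin d → ℝ) : a ⬝ᵥ (M *ᵥ b) = (M *ᵥ a) ⬝ᵥ b := by
  rw [dotProduct_mulVec, ← mulVec_transpose, my_transpose_eq hM]

-- Cauchy–Schwarz with respect to a positive semidefinite matrix
open scoped MatrixOrder in
lemma my_psd_cs {d : ℕ} {M : Matrix (Fin d) (Fin d) ℝ} (hM : M.PosSemidef)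
    (a b : Fin d → ℝ) :
    |a ⬝ᵥ (M *ᵥ b)| ≤ Real.sqrt (a ⬝ᵥ (M *ᵥ a)) * Real.sqrt (b ⬝ᵥ (M *ᵥ b)) := by
  set N := CFC.sqrt M with hN
  have hNN : N * N = M := CFC.sqrt_mul_sqrt_self M hM.nonneg
  have hNh : N.IsHermitian := (CFC.sqrt_nonneg M).posSemidef.isHermitian
  have key : ∀ x z : Fin d → ℝ, x ⬝ᵥ (M *ᵥ z) = (N *ᵥ x) ⬝ᵥ (N *ᵥ z) := by
    intro x z
    rw [← hNN, ← mulVec_mulVec, my_herm_dot hNh]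
  rw [key a b, key a a, key b b]
  exact my_cs _ _

theorem ridge_regression_elliptic_error_bound (d n : ℕ) (lam B : ℝ) (hlam : 0 < lam)
    (θstar : Fin d → ℝ) (hB : Real.sqrt (θstar ⬝ᵥ θstar) ≤ B)
    (h : Fin n → Fin d → ℝ)
    (y : Fin n → ℝ) (hy : ∀ j, y j = θstar ⬝ᵥ h j)
    (S : Matrix (Fin d) (Fin d) ℝ)
    (hS : S = lam • (1 : Matrix (Fin d) (Fin d) ℝ) + ∑ j, vecMulVec (h j) (h j))
    (θhat : Fin d → ℝ) (hθhat : θhat = S⁻¹ *ᵥ (∑ j, y j • h j)) :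
    ∀ v : Fin d → ℝ,
      |(θhat - θstar) ⬝ᵥ v| ≤ B * Real.sqrt lam * Real.sqrt (v ⬝ᵥ (S⁻¹ *ᵥ v)) := by
  intro v
  have hB0 : 0 ≤ B := le_trans (Real.sqrt_nonneg _) hB
  -- the sum of rank-one matrices is positive semidefinite
  have hsum_ps : (∑ j, vecMulVec (h j) (h j) : Matrix (Fin d) (Fin d) ℝ).PosSemidef := by
    refine Matrix.PosSemidef.of_dotProduct_mulVec_nonneg ?_ ?_
    · ext i k
      simp [conjTranspose_apply, Matrix.sum_apply, vecMulVec_apply, mul_comm]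
    · intro x
      simp only [star_trivial, my_sum_mulVec, my_dotProduct_sum]
      refine Finset.sum_nonneg fun j _ => ?_
      rw [my_vecMulVec_mulVec, dotProduct_smul, smul_eq_mul, dotProduct_comm]
      exact mul_self_nonneg _
  -- S is positive definite
  have hSpd : S.PosDef := by
    rw [hS]
    refine Matrix.PosDef.add_posSemidef ?_ hsum_ps
    have : lam • (1 : Matrix (Fin d) (Fin d) ℝ) = Matrix.diagonal (fun _ => lam) := by
      ext i j
      simp [Matrix.diagonal, Matrix.one_apply]
    rw [this]
    exact Matrix.PosDef.diagonal fun _ => hlam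
  have hdet : IsUnit S.det := isUnit_iff_ne_zero.mpr hSpd.det_pos.ne'
  have hSinv_ps : (S⁻¹).PosSemidef := hSpd.inv.posSemidef
  -- identity for S *ᵥ θstar
  have hSθ : S *ᵥ θstar = lam • θstar + ∑ j, y j • h j := by
    rw [hS, add_mulVec, my_sum_mulVec, smul_mulVec, one_mulVec]
    congr 1
    refine Finset.sum_congr rfl fun j _ => ?_
    rw [my_vecMulVec_mulVec, hy j, dotProduct_comm]
  -- closed form for the error
  set u : Fin d → ℝ := S⁻¹ *ᵥ θstar with hu
  have hθhat' : θhat - θstar = -(lam • u) := by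
    have h1 : (∑ j, y j • h j) = S *ᵥ θstar - lam • θstar := by
      rw [hSθ]; abel
    rw [hθhat, h1, mulVec_sub, mulVec_mulVec, Matrix.nonsing_inv_mul S hdet, one_mulVec,
      mulVec_smul, hu]
    abel
  have hSu : S *ᵥ u = θstar := by
    rw [hu, mulVec_mulVec, Matrix.mul_nonsing_inv S hdet, one_mulVec]
  -- bound on θstar ⬝ᵥ u
  have huu : 0 ≤ u ⬝ᵥ u := my_dot_self_nonneg u
  set s : ℝ := Real.sqrt (u ⬝ᵥ u) with hs
  have hs2 : s ^ 2 = u ⬝ᵥ u := Real.sq_sqrt huu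
  have hquad : lam * (u ⬝ᵥ u) ≤ θstar ⬝ᵥ u := by
    have : θstar ⬝ᵥ u = u ⬝ᵥ (S *ᵥ u) := by
      rw [my_herm_dot hSpd.isHermitian, hSu, dotProduct_comm]
    rw [this, hS, add_mulVec, dotProduct_add, smul_mulVec, one_mulVec,
      dotProduct_smul, smul_eq_mul]
    have : 0 ≤ u ⬝ᵥ ((∑ j, vecMulVec (h j) (h j)) *ᵥ u) := by
      simpa using hsum_ps.dotProduct_mulVec_nonneg u
    linarith
  have hcs : θstar ⬝ᵥ u ≤ B * s := by
    calc θstar ⬝ᵥ u ≤ |θstar ⬝ᵥ u| := le_abs_self _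
      _ ≤ Real.sqrt (θstar ⬝ᵥ θstar) * s := my_cs θstar u
      _ ≤ B * s := by
          exact mul_le_mul_of_nonneg_right hB (Real.sqrt_nonneg _)
  have hsle : s ≤ B / lam := by
    rcases eq_or_lt_of_le (Real.sqrt_nonneg (u ⬝ᵥ u)) with h0 | h0
    · rw [hs, ← h0]; positivity
    · have : lam * s ^ 2 ≤ B * s := by rw [hs2]; linarith
      rw [div_eq_inv_mul, ← mul_le_mul_iff_right₀ hlam, ← mul_assoc, mul_inv_cancel₀ hlam.ne',
        one_mul]
      nlinarith
  have ht : θstar ⬝ᵥ u ≤ B ^ 2 / lam := by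
    calc θstar ⬝ᵥ u ≤ B * s := hcs
      _ ≤ B * (B / lam) := mul_le_mul_of_nonneg_left hsle hB0
      _ = B ^ 2 / lam := by ring
  have hsqrt_t : Real.sqrt (θstar ⬝ᵥ u) ≤ B / Real.sqrt lam := by
    calc Real.sqrt (θstar ⬝ᵥ u) ≤ Real.sqrt (B ^ 2 / lam) := Real.sqrt_le_sqrt ht
      _ = B / Real.sqrt lam := by
          rw [Real.sqrt_div (sq_nonneg B), Real.sqrt_sq hB0]
  -- final estimate
  have hdot : (θhat - θstar) ⬝ᵥ v = -(lam * (θstar ⬝ᵥ (S⁻¹ *ᵥ v))) := by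
    rw [hθhat', neg_dotProduct, smul_dotProduct, smul_eq_mul, hu,
      ← my_herm_dot hSinv_ps.isHermitian]
  rw [hdot, abs_neg, abs_mul, abs_of_pos hlam]
  calc lam * |θstar ⬝ᵥ (S⁻¹ *ᵥ v)|
      ≤ lam * (Real.sqrt (θstar ⬝ᵥ (S⁻¹ *ᵥ θstar)) * Real.sqrt (v ⬝ᵥ (S⁻¹ *ᵥ v))) :=
        mul_le_mul_of_nonneg_left (my_psd_cs hSinv_ps θstar v) hlam.le
    _ ≤ lam * ((B / Real.sqrt lam) * Real.sqrt (v ⬝ᵥ (S⁻¹ *ᵥ v))) := by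
        refine mul_le_mul_of_nonneg_left ?_ hlam.le
        exact mul_le_mul_of_nonneg_right hsqrt_t (Real.sqrt_nonneg _)
    _ = B * Real.sqrt lam * Real.sqrt (v ⬝ᵥ (S⁻¹ *ᵥ v)) := by
        have hsl : Real.sqrt lam ≠ 0 := (Real.sqrt_pos.mpr hlam).ne'
        field_simp
        ring_nf
        rw [Real.sq_sqrt hlam.le]
        ring
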